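/- Let G be a group of order p^5 (p > 3 prime) with Z(G) = G' ≅ C_p and cd(G) = {1, p^2}. Then G is both a VZ-group and an extraspecial p-group, and cod(G) = {1, p, p^3}. -/

import Mathlib

open scoped Pointwise
open scoped commutatorElement

/-- A representation is irreducible if the space is nontrivial and the only
invariant subspaces are `⊥` and `⊤`. -/
def Rep.IsIrreducible {G V : Type*} [Group G] [AddCommGroup V] [Module ℂ V]
    (ρ : Representation ℂ G V) : Prop :=
  Nontrivial V ∧ ∀ W : Submodule ℂ V, (∀ g : G, ∀ v ∈ W, ρ g v ∈ W) → W = ⊥ ∨ W = ⊤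

/-- The kernel of a representation. -/
noncomputable def Rep.ker {G V : Type*} [Group G] [AddCommGroup V] [Module ℂ V]
    (ρ : Representation ℂ G V) : Subgroup G := (Representation.asGroupHom ρ).ker

/-- The codegree of (the character of) a representation: `|G : ker| / degree`. -/
noncomputable def Rep.cod {G V : Type*} [Group G] [AddCommGroup V] [Module ℂ V]
    (ρ : Representation ℂ G V) : ℕ := (Rep.ker ρ).index / Module.finrank ℂ V

/-- The set of codegrees of irreducible (complex) characters of `G`. -/
def codSet (G : Type*) [Group G] : Set ℕ :=
  {n | ∃ (V : Type) (_ : AddCommGroup V) (_ : Module ℂ V) (_ : FiniteDimensional ℂ V)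
      (ρ : Representation ℂ G V), Rep.IsIrreducible ρ ∧ Rep.cod ρ = n}

/-- The set of codegrees of nonlinear irreducible characters of `G`. -/
def nlCodSet (G : Type*) [Group G] : Set ℕ :=
  {n | ∃ (V : Type) (_ : AddCommGroup V) (_ : Module ℂ V) (_ : FiniteDimensional ℂ V)
      (ρ : Representation ℂ G V), Rep.IsIrreducible ρ ∧ 1 < Module.finrank ℂ V ∧
      Rep.cod ρ = n}

/-- The set of degrees of irreducible characters of `G`. -/
def cdSet (G : Type*) [Group G] : Set ℕ :=
  {n | ∃ (V : Type) (_ : AddCommGroup V) (_ : Module ℂ V) (_ : FiniteDimensional ℂ V)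
      (ρ : Representation ℂ G V), Rep.IsIrreducible ρ ∧ Module.finrank ℂ V = n}

/-- `G` is a VZ-group: every nonlinear irreducible character vanishes off the center. -/
def IsVZ (G : Type*) [Group G] : Prop :=
  ∀ (V : Type) (_ : AddCommGroup V) (_ : Module ℂ V) (_ : FiniteDimensional ℂ V)
    (ρ : Representation ℂ G V), Rep.IsIrreducible ρ → 1 < Module.finrank ℂ V →
    ∀ g ∉ Subgroup.center G, LinearMap.trace ℂ V (ρ g) = 0

/-- `G` is a Camina group: the conjugacy class of every `g ∉ G'` is `gG'`. -/
def IsCamina (G : Type*) [Group G] : Prop :=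
  ∀ g : G, g ∉ commutator G → {h | IsConj g h} = g • (commutator G : Set G)

section AuxLemmas

variable {G : Type*} [Group G] {V : Type*} [AddCommGroup V] [Module ℂ V]

lemma aux_mem_repker_iff (ρ : Representation ℂ G V) (g : G) :
    g ∈ Rep.ker ρ ↔ ρ g = 1 := by
  rw [Rep.ker, MonoidHom.mem_ker]
  constructor
  · intro h
    have := congrArg Units.val h
    rwa [Representation.asGroupHom_apply, Units.val_one] at this
  · intro h
    apply Units.ext
    rw [Representation.asGroupHom_apply, Units.val_one, h]

/-- Schur's lemma for the bespoke irreducibility predicate. -/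
lemma aux_schur [FiniteDimensional ℂ V] (ρ : Representation ℂ G V)
    (hirr : Rep.IsIrreducible ρ) (f : Module.End ℂ V)
    (hf : ∀ g : G, ρ g * f = f * ρ g) : ∃ c : ℂ, f = c • 1 := by
  obtain ⟨hnt, hW⟩ := hirr
  haveI := hnt
  obtain ⟨c, hc⟩ := Module.End.exists_eigenvalue f
  refine ⟨c, ?_⟩
  have hinv : ∀ g : G, ∀ v ∈ f.eigenspace c, ρ g v ∈ f.eigenspace c := by
    intro g v hv
    rw [Module.End.mem_eigenspace_iff] at hv ⊢
    calc f (ρ g v) = (f * ρ g) v := rfl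
      _ = (ρ g * f) v := by rw [hf g]
      _ = ρ g (f v) := rfl
      _ = ρ g (c • v) := by rw [hv]
      _ = c • ρ g v := map_smul _ _ _
  have htop : f.eigenspace c = ⊤ := by
    rcases hW _ hinv with h | h
    · exact absurd h hc
    · exact h
  ext v
  have hv : v ∈ f.eigenspace c := htop ▸ Submodule.mem_top
  rw [Module.End.mem_eigenspace_iff] at hv
  simpa using hv

/-- On a 1-dimensional space every endomorphism is scalar. -/
lemma aux_scalar1 (h1 : Module.finrank ℂ V = 1) (f : Module.End ℂ V) :
    ∃ c : ℂ, f = c • 1 := by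
  obtain ⟨v, hv0, hv⟩ := finrank_eq_one_iff'.mp h1
  obtain ⟨a, ha⟩ := hv (f v)
  refine ⟨a, ?_⟩
  ext w
  obtain ⟨c, rfl⟩ := hv w
  have : f (c • v) = c • f v := map_smul f c v
  rw [this, ← ha]
  simp [smul_smul, mul_comm]

/-- Every submodule of `ℂ` is `⊥` or `⊤`. -/
lemma aux_submodule_C (W : Submodule ℂ ℂ) : W = ⊥ ∨ W = ⊤ := by
  rcases eq_or_ne W ⊥ with h | h
  · exact Or.inl h
  · right
    obtain ⟨x, hxW, hx0⟩ := Submodule.exists_mem_ne_zero_of_ne_bot h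
    rw [Submodule.eq_top_iff']
    intro y
    have : (y * x⁻¹) • x ∈ W := W.smul_mem _ hxW
    rwa [smul_eq_mul, mul_assoc, inv_mul_cancel₀ hx0, mul_one] at this

end AuxLemmas

section MainAux

variable {p : ℕ} {G : Type*} [Group G] [Finite G]

/-- If `Z(G) = G'` has prime order `p` and `ρ` is irreducible of dimension `> 1`,
then `ρ` is nontrivial on every nontrivial central element. -/
lemma aux_ker_center (hp : p.Prime)
    (hZG' : Subgroup.center G = commutator G)
    (hZ : Nat.card (Subgroup.center G) = p)
    {V : Type*} [AddCommGroup V] [Module ℂ V] [FiniteDimensional ℂ V]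
    (ρ : Representation ℂ G V) (hirr : Rep.IsIrreducible ρ)
    (hrank : 1 < Module.finrank ℂ V)
    {z : G} (hz : z ∈ Subgroup.center G) (hz1 : z ≠ 1) : ρ z ≠ 1 := by
  intro h1
  -- `z` generates the center
  have hzp : z ^ p = 1 := by
    have : (⟨z, hz⟩ : Subgroup.center G) ^ p = 1 := by
      rw [← hZ]; exact pow_card_eq_one'
    have := congrArg (Subtype.val) this
    simpa using this
  have horder : orderOf z = p := by
    have hdvd : orderOf z ∣ p := orderOf_dvd_of_pow_eq_one hzp
    rcases (Nat.Prime.eq_one_or_self_of_dvd hp _ hdvd) with h | h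
    · exact absurd (orderOf_eq_one_iff.mp h) hz1
    · exact h
  have hzpow_le : Subgroup.zpowers z ≤ Subgroup.center G :=
    Subgroup.zpowers_le.mpr hz
  have hcenter_eq : Subgroup.zpowers z = Subgroup.center G := by
    apply Subgroup.eq_of_le_of_card_ge hzpow_le
    rw [hZ, Nat.card_zpowers, horder]
  -- the center is in the kernel of `ρ`
  have hker : Subgroup.center G ≤ Rep.ker ρ := by
    rw [← hcenter_eq]
    exact Subgroup.zpowers_le.mpr ((aux_mem_repker_iff ρ z).mpr h1)
  -- the image of `ρ` is commutative
  have hcomm : ∀ x y : G, ρ x * ρ y = ρ y * ρ x := by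
    intro x y
    have h1 : ρ ⁅x, y⁆ = 1 := by
      refine (aux_mem_repker_iff ρ _).mp (hker ?_)
      rw [hZG']
      exact Subgroup.commutator_mem_commutator (Subgroup.mem_top x) (Subgroup.mem_top y)
    have h2 : x * y = ⁅x, y⁆ * (y * x) := by group
    calc ρ x * ρ y = ρ (x * y) := (map_mul ρ x y).symm
      _ = ρ (⁅x, y⁆ * (y * x)) := by rw [← h2]
      _ = ρ ⁅x, y⁆ * ρ (y * x) := map_mul ρ _ _
      _ = ρ (y * x) := by rw [h1, one_mul]
      _ = ρ y * ρ x := map_mul ρ y x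
  -- hence every `ρ x` is scalar, so the dimension is 1
  obtain ⟨hnt, hW⟩ := hirr
  haveI := hnt
  obtain ⟨v, hv0⟩ := exists_ne (0 : V)
  have hscal : ∀ x : G, ∃ c : ℂ, ρ x = c • 1 := fun x =>
    aux_schur ρ ⟨hnt, hW⟩ (ρ x) (fun g => (hcomm g x))
  have hWinv : ∀ g : G, ∀ w ∈ (ℂ ∙ v), ρ g w ∈ (ℂ ∙ v) := by
    intro g w hw
    obtain ⟨c, hc⟩ := hscal g
    have : ρ g w = c • w := by rw [hc]; simp
    rw [this]
    exact Submodule.smul_mem _ c hw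
  rcases hW _ hWinv with h | h
  · exact hv0 (by simpa using (Submodule.span_singleton_eq_bot.mp h))
  · have : Module.finrank ℂ V = 1 := by
      rw [← finrank_top ℂ V, ← h]
      exact finrank_span_singleton hv0
    omega

/-- Vanishing off the center. -/
lemma aux_vanish (hp : p.Prime)
    (hZG' : Subgroup.center G = commutator G)
    (hZ : Nat.card (Subgroup.center G) = p)
    {V : Type*} [AddCommGroup V] [Module ℂ V] [FiniteDimensional ℂ V]
    (ρ : Representation ℂ G V) (hirr : Rep.IsIrreducible ρ)
    (hrank : 1 < Module.finrank ℂ V)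
    {g : G} (hg : g ∉ Subgroup.center G) : LinearMap.trace ℂ V (ρ g) = 0 := by
  obtain ⟨y, hy⟩ : ∃ y : G, ¬ (y * g = g * y) := by
    by_contra h
    push_neg at h
    exact hg (Subgroup.mem_center_iff.mpr h)
  set z := ⁅y, g⁆ with hzdef
  have hzc : z ∈ Subgroup.center G := by
    rw [hZG']
    exact Subgroup.commutator_mem_commutator (Subgroup.mem_top y) (Subgroup.mem_top g)
  have hz1 : z ≠ 1 := by
    intro h
    exact hy (commutatorElement_eq_one_iff_mul_comm.mp h)
  obtain ⟨c, hc⟩ : ∃ c : ℂ, ρ z = c • 1 := by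
    refine aux_schur ρ hirr (ρ z) (fun h => ?_)
    have h1 : h * z = z * h := Subgroup.mem_center_iff.mp hzc h
    calc ρ h * ρ z = ρ (h * z) := (map_mul ρ _ _).symm
      _ = ρ (z * h) := by rw [h1]
      _ = ρ z * ρ h := map_mul ρ _ _
  have hcne : c ≠ 1 := by
    intro h
    apply aux_ker_center hp hZG' hZ ρ hirr hrank hzc hz1
    rw [hc, h, one_smul]
  have key1 : ρ (z * g) = c • ρ g := by
    rw [map_mul, hc, smul_mul_assoc, one_mul]
  have key2 : z * g = y * g * y⁻¹ := by rw [hzdef]; group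
  have htr : LinearMap.trace ℂ V (ρ (z * g)) = LinearMap.trace ℂ V (ρ g) := by
    rw [key2]
    have : ρ (y * g * y⁻¹) = (ρ y * ρ g) * ρ y⁻¹ := by
      rw [← map_mul, ← map_mul]
    rw [this, LinearMap.trace_mul_comm, ← map_mul, ← map_mul]
    congr 1
    group
  rw [key1, map_smul, smul_eq_mul] at htr
  have : (c - 1) * LinearMap.trace ℂ V (ρ g) = 0 := by ring_nf; linear_combination htr
  rcases mul_eq_zero.mp this with h | h
  · exact absurd (sub_eq_zero.mp h) hcne
  · exact h

/-- Nonlinear irreducible representations are faithful. -/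
lemma aux_ker_bot (hp : p.Prime)
    (hZG' : Subgroup.center G = commutator G)
    (hZ : Nat.card (Subgroup.center G) = p)
    {V : Type*} [AddCommGroup V] [Module ℂ V] [FiniteDimensional ℂ V]
    (ρ : Representation ℂ G V) (hirr : Rep.IsIrreducible ρ)
    (hrank : 1 < Module.finrank ℂ V) : Rep.ker ρ = ⊥ := by
  rw [Subgroup.eq_bot_iff_forall]
  intro g hg
  have hρg : ρ g = 1 := (aux_mem_repker_iff ρ g).mp hg
  by_contra hg1
  by_cases hgc : g ∈ Subgroup.center G
  · exact aux_ker_center hp hZG' hZ ρ hirr hrank hgc hg1 hρg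
  · have h0 := aux_vanish hp hZG' hZ ρ hirr hrank hgc
    rw [hρg, LinearMap.trace_one] at h0
    have : Module.finrank ℂ V = 0 := by exact_mod_cast h0
    omega

end MainAux

section OneDim

variable {G : Type*} [Group G]

/-- The 1-dimensional representation attached to a character `χ : G →* ℂˣ`. -/
noncomputable def repOfChar (χ : G →* ℂˣ) : Representation ℂ G ℂ :=
  ((algebraMap ℂ (Module.End ℂ ℂ)).toMonoidHom.comp ((Units.coeHom ℂ).comp χ))

lemma repOfChar_apply (χ : G →* ℂˣ) (g : G) (v : ℂ) :
    repOfChar χ g v = (χ g : ℂ) * v := by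
  simp [repOfChar, Module.algebraMap_end_apply, smul_eq_mul]

lemma repOfChar_irreducible (χ : G →* ℂˣ) : Rep.IsIrreducible (repOfChar χ) :=
  ⟨inferInstance, fun W _ => aux_submodule_C W⟩

lemma repOfChar_ker (χ : G →* ℂˣ) : Rep.ker (repOfChar χ) = χ.ker := by
  ext g
  rw [aux_mem_repker_iff, MonoidHom.mem_ker]
  constructor
  · intro h
    have := congrArg (fun f : Module.End ℂ ℂ => f 1) h
    simp only [repOfChar_apply, mul_one, Module.End.one_apply] at this
    exact Units.val_eq_one.mp this
  · intro h
    refine LinearMap.ext fun v => ?_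
    rw [repOfChar_apply, h]
    simp

end OneDim

/-- Let `G` be a group of order `p^5` (`p > 3` prime) with
`Z(G) = G' ≅ C_p` and `cd(G) = {1, p^2}`. Then `G` is a VZ-group and an extraspecial
`p`-group, and `cod(G) = {1, p, p^3}`. -/
theorem stmt17 {p : ℕ} (hp : p.Prime) (hp3 : 3 < p) (G : Type*) [Group G] [Finite G]
    (hcard : Nat.card G = p ^ 5) (hZG' : Subgroup.center G = commutator G)
    (hZ : Nat.card (Subgroup.center G) = p) (hcd : cdSet G = {1, p ^ 2}) :
    IsVZ G ∧
      (Nontrivial (G ⧸ Subgroup.center G) ∧ ∀ x : G ⧸ Subgroup.center G, x ^ p = 1) ∧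
      codSet G = {1, p, p ^ 3} := by
  have hp1 : 1 < p := hp.one_lt
  have hcomm_center : ∀ x y : G, ⁅x, y⁆ ∈ Subgroup.center G := by
    intro x y
    rw [hZG']
    exact Subgroup.commutator_mem_commutator (Subgroup.mem_top x) (Subgroup.mem_top y)
  have hzpow : ∀ z ∈ Subgroup.center G, z ^ p = 1 := by
    intro z hz
    have : (⟨z, hz⟩ : Subgroup.center G) ^ p = 1 := by
      rw [← hZ]; exact pow_card_eq_one'
    have := congrArg (Subtype.val) this
    simpa using this
  -- p-th powers are central
  have hpow_center : ∀ g : G, g ^ p ∈ Subgroup.center G := by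
    intro g
    rw [Subgroup.mem_center_iff]
    intro h
    have hz := hcomm_center h g
    have hcomm : ⁅h, g⁆ * g = g * ⁅h, g⁆ := (Subgroup.mem_center_iff.mp hz g).symm
    have key : h * g ^ p * h⁻¹ = g ^ p := by
      calc h * g ^ p * h⁻¹ = (h * g * h⁻¹) ^ p := by rw [conj_pow]
        _ = (⁅h, g⁆ * g) ^ p := by congr 1; group
        _ = ⁅h, g⁆ ^ p * g ^ p := (Commute.mul_pow hcomm p)
        _ = g ^ p := by rw [hzpow _ hz, one_mul]
    calc h * g ^ p = (h * g ^ p * h⁻¹) * h := by group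
      _ = g ^ p * h := by rw [key]
  -- the quotient by the center has order p^4
  have hindex : (Subgroup.center G).index = p ^ 4 := by
    have h := Subgroup.card_mul_index (Subgroup.center G)
    rw [hZ, hcard] at h
    have hpne : p ≠ 0 := hp.ne_zero
    have : p * (Subgroup.center G).index = p * p ^ 4 := by
      rw [h]; ring
    exact Nat.eq_of_mul_eq_mul_left hp.pos this
  refine ⟨?_, ⟨?_, ?_⟩, ?_⟩
  · -- VZ
    intro V _ _ _ ρ hirr hrank g hg
    exact aux_vanish hp hZG' hZ ρ hirr hrank hg
  · -- nontrivial quotient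
    have : Nat.card (G ⧸ Subgroup.center G) = p ^ 4 := hindex
    rw [← Finite.one_lt_card_iff_nontrivial, this]
    exact Nat.one_lt_pow (by norm_num) hp1
  · -- exponent p
    intro x
    induction x using QuotientGroup.induction_on with
    | H g =>
      rw [← QuotientGroup.mk_pow, QuotientGroup.eq_one_iff]
      exact hpow_center g
  · -- codSet = {1, p, p^3}
    ext n
    simp only [Set.mem_insert_iff, Set.mem_singleton_iff]
    constructor
    · rintro ⟨V, iA, iM, iFD, ρ, hirr, rfl⟩
      have hdeg : Module.finrank ℂ V ∈ cdSet G := ⟨V, iA, iM, iFD, ρ, hirr, rfl⟩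
      rw [hcd] at hdeg
      simp only [Set.mem_insert_iff, Set.mem_singleton_iff] at hdeg
      rcases hdeg with h1 | h2
      · -- linear case
        -- the determinant character
        set χ : G →* ℂˣ :=
          (Units.map (LinearMap.det : Module.End ℂ V →* ℂ)).comp
            (Representation.asGroupHom ρ) with hχdef
        have hχval : ∀ g : G, (χ g : ℂ) = LinearMap.det (ρ g) := by
          intro g
          simp [hχdef, ← Representation.asGroupHom_apply]
        have hkerχ : χ.ker = Rep.ker ρ := by
          ext g
          rw [MonoidHom.mem_ker, aux_mem_repker_iff]
          constructor
          · intro h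
            obtain ⟨c, hc⟩ := aux_scalar1 h1 (ρ g)
            have hdet : LinearMap.det (ρ g) = c := by
              rw [hc, LinearMap.det_smul, h1, pow_one, Module.End.one_eq_id,
                LinearMap.det_id, mul_one]
            have : (χ g : ℂ) = 1 := by rw [h]; simp
            rw [hχval, hdet] at this
            rw [hc, this, one_smul]
          · intro h
            apply Units.ext
            rw [Units.val_one, hχval, h, Module.End.one_eq_id, LinearMap.det_id]
        -- the commutator subgroup is in the kernel
        have hcommker : commutator G ≤ Rep.ker ρ := by
          rw [commutator_def, Subgroup.commutator_le]
          intro x _ y _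
          rw [aux_mem_repker_iff]
          obtain ⟨a, ha⟩ := aux_scalar1 h1 (ρ x)
          obtain ⟨b, hb⟩ := aux_scalar1 h1 (ρ y)
          have hxy : ρ (x * y) = ρ (y * x) := by
            rw [map_mul, map_mul, ha, hb]
            simp [smul_smul, mul_comm]
          have h2 : ⁅x, y⁆ = (x * y) * (y * x)⁻¹ := by group
          calc ρ ⁅x, y⁆ = ρ ((x * y) * (y * x)⁻¹) := by rw [← h2]
            _ = ρ (x * y) * ρ ((y * x)⁻¹) := map_mul ρ _ _
            _ = ρ (y * x) * ρ ((y * x)⁻¹) := by rw [hxy]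
            _ = ρ ((y * x) * (y * x)⁻¹) := (map_mul ρ _ _).symm
            _ = 1 := by rw [mul_inv_cancel, map_one]
        -- the range of χ consists of p-th roots of unity
        haveI : NeZero p := ⟨hp.ne_zero⟩
        have hrange : χ.range ≤ rootsOfUnity p ℂ := by
          rintro x ⟨g, rfl⟩
          rw [mem_rootsOfUnity]
          have hgp : g ^ p ∈ χ.ker := by
            rw [hkerχ]
            apply hcommker
            rw [← hZG']
            exact hpow_center g
          rw [MonoidHom.mem_ker] at hgp
          rw [← map_pow, hgp]
        have hcarddvd : Nat.card χ.range ∣ p := by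
          have h := Subgroup.card_dvd_of_le hrange
          rwa [Complex.card_rootsOfUnity] at h
        have hindexval : (Rep.ker ρ).index = Nat.card χ.range := by
          rw [← hkerχ, Subgroup.index_ker]
        rcases hp.eq_one_or_self_of_dvd _ hcarddvd with h | h
        · left
          rw [Rep.cod, h1, hindexval, h]
        · right; left
          rw [Rep.cod, h1, hindexval, h]
          exact Nat.div_one p
      · -- degree p^2 case
        right; right
        have hrank : 1 < Module.finrank ℂ V := by
          rw [h2]
          exact Nat.one_lt_pow (by norm_num) hp1
        have hker := aux_ker_bot hp hZG' hZ ρ hirr hrank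
        rw [Rep.cod, hker, Subgroup.index_bot, hcard, h2,
          Nat.pow_div (by norm_num) hp.pos]
    · intro hn
      rcases hn with h | h | h
      · -- codegree 1 : the trivial representation
        rw [h]
        refine ⟨ℂ, inferInstance, inferInstance, inferInstance, repOfChar 1,
          repOfChar_irreducible 1, ?_⟩
        have hker : Rep.ker (repOfChar (1 : G →* ℂˣ)) = ⊤ := by
          rw [repOfChar_ker]
          ext g
          simp [MonoidHom.mem_ker]
        rw [Rep.cod, hker, Subgroup.index_top, Module.finrank_self]
      · -- codegree p : a nontrivial linear character
        rw [h]
        -- the abelianization is nontrivial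
        haveI : Nontrivial (Abelianization G) := by
          rw [← Finite.one_lt_card_iff_nontrivial]
          show 1 < Nat.card (G ⧸ commutator G)
          have : Nat.card (G ⧸ commutator G) = (commutator G).index := rfl
          rw [this, ← hZG', hindex]
          exact Nat.one_lt_pow (by norm_num) hp1
        obtain ⟨a, ha⟩ := exists_ne (1 : Abelianization G)
        haveI : NeZero ((Monoid.exponent (Abelianization G) : ℂ)) :=
          ⟨Nat.cast_ne_zero.mpr (Monoid.exponent_ne_zero_of_finite)⟩
        obtain ⟨φ, hφ⟩ :=
          CommGroup.exists_apply_ne_one_of_hasEnoughRootsOfUnity (Abelianization G) ℂ ha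
        set χ : G →* ℂˣ := φ.comp Abelianization.of with hχdef
        -- χ has image of order exactly p
        haveI : NeZero p := ⟨hp.ne_zero⟩
        have hpth : ∀ g : G, χ g ^ p = 1 := by
          intro g
          have h1 : Abelianization.of (g ^ p) = 1 := by
            rw [← Abelianization.mk_eq_of]
            exact (QuotientGroup.eq_one_iff _).mpr (hZG' ▸ hpow_center g)
          rw [hχdef]
          simp only [MonoidHom.comp_apply]
          rw [← map_pow, ← map_pow, h1, map_one]
        have hrange : χ.range ≤ rootsOfUnity p ℂ := by
          rintro x ⟨g, rfl⟩
          rw [mem_rootsOfUnity]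
          exact hpth g
        have hcarddvd : Nat.card χ.range ∣ p := by
          have h := Subgroup.card_dvd_of_le hrange
          rwa [Complex.card_rootsOfUnity] at h
        have hnontriv : Nat.card χ.range ≠ 1 := by
          intro h
          rw [Subgroup.card_eq_one] at h
          obtain ⟨g, hg⟩ : ∃ g : G, Abelianization.of g = a := by
            obtain ⟨g, hg⟩ := Quot.exists_rep a
            exact ⟨g, by rw [← Abelianization.mk_eq_of, hg]⟩
          have hmem : χ g ∈ χ.range := ⟨g, rfl⟩
          rw [h, Subgroup.mem_bot] at hmem
          apply hφ
          rw [← hg]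
          exact hmem
        have hcardp : Nat.card χ.range = p := by
          rcases hp.eq_one_or_self_of_dvd _ hcarddvd with h | h
          · exact absurd h hnontriv
          · exact h
        refine ⟨ℂ, inferInstance, inferInstance, inferInstance, repOfChar χ,
          repOfChar_irreducible χ, ?_⟩
        rw [Rep.cod, repOfChar_ker, Module.finrank_self, Subgroup.index_ker, hcardp]
        exact Nat.div_one p
      · -- codegree p^3 : a representation of degree p^2
        rw [h]
        have hmem : p ^ 2 ∈ cdSet G := by
          rw [hcd]; right; rfl
        obtain ⟨V, iAG, iM, iFD, ρ, hirr, hdeg⟩ := hmem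
        refine ⟨V, iAG, iM, iFD, ρ, hirr, ?_⟩
        have hrank : 1 < Module.finrank ℂ V := by
          rw [hdeg]
          exact Nat.one_lt_pow (by norm_num) hp1
        have hker := aux_ker_bot hp hZG' hZ ρ hirr hrank
        rw [Rep.cod, hker, Subgroup.index_bot, hcard, hdeg,
          Nat.pow_div (by norm_num) hp.pos]
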